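/- Let b = ℂE ⊕ ℂH be the Borel subalgebra of sl_2(ℂ) and V(m) the (m+1)-dimensional simple sl_2-module restricted to b. Then V(m) is a zad b-module if and only if m = 2. Consequently the 4-dimensional aging algebra age(1) = b ⋉ V(2) (with Hu = u, Hv = −v, Ev = u, Eu = 0) is not zpd. -/

import Mathlib

set_option linter.unusedSectionVars false

/-- The linear span of all brackets `⁅x, y⁆` in a Lie algebra `L` over `F`,
i.e. the derived subalgebra `[L, L]` viewed as a subspace. -/
def lieBracketSpan (F L : Type*) [Field F] [LieRing L] [LieAlgebra F L] : Submodule F L :=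
  Submodule.span F {z : L | ∃ x y : L, ⁅x, y⁆ = z}

/-- A Lie algebra `L` over a field `F` is zero product determined (zpd) if every bilinear
map `f : L × L → F` vanishing on commuting pairs factors through the bracket via a linear
map `Φ : [L, L] → F`. -/
def IsZPD (F L : Type*) [Field F] [LieRing L] [LieAlgebra F L] : Prop :=
  ∀ f : L →ₗ[F] L →ₗ[F] F, (∀ x y : L, ⁅x, y⁆ = 0 → f x y = 0) →
    ∃ Φ : lieBracketSpan F L →ₗ[F] F,
      ∀ x y : L, f x y = Φ ⟨⁅x, y⁆, Submodule.subset_span ⟨x, y, rfl⟩⟩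


/-- The subspace `L·V` of a Lie module, spanned by all `⁅x, v⁆`. -/
def lieActionSpan (F L V : Type*) [Field F] [LieRing L] [LieAlgebra F L]
    [AddCommGroup V] [Module F V] [LieRingModule L V] : Submodule F V :=
  Submodule.span F {z : V | ∃ (x : L) (v : V), ⁅x, v⁆ = z}

/-- A module `V` over a Lie algebra `L` is zero action determined (zad) if every bilinear
map `f : L × V → F` with `f(x,v) = 0` whenever `x·v = 0` factors through the action via a
linear map `Φ : L·V → F`. -/
def IsZAD (F L V : Type*) [Field F] [LieRing L] [LieAlgebra F L]
    [AddCommGroup V] [Module F V] [LieRingModule L V] [LieModule F L V] : Prop :=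
  ∀ f : L →ₗ[F] V →ₗ[F] F, (∀ (x : L) (v : V), ⁅x, v⁆ = 0 → f x v = 0) →
    ∃ Φ : lieActionSpan F L V →ₗ[F] F,
      ∀ (x : L) (v : V), f x v = Φ ⟨⁅x, v⁆, Submodule.subset_span ⟨x, v, rfl⟩⟩


/-- The semidirect product `L ⋉ V` of a Lie algebra and a Lie module, as a type. -/
def SemidirectProduct' (L V : Type*) := L × V

namespace SemidirectProduct'

variable (F L V : Type*) [Field F] [LieRing L] [LieAlgebra F L]
  [AddCommGroup V] [Module F V] [LieRingModule L V] [LieModule F L V]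

instance : AddCommGroup (SemidirectProduct' L V) :=
  inferInstanceAs (AddCommGroup (L × V))

instance : Module F (SemidirectProduct' L V) := inferInstanceAs (Module F (L × V))

/-- Build an element of `L ⋉ V`. -/
def mk (x : L) (v : V) : SemidirectProduct' L V := (x, v)

instance : LieRing (SemidirectProduct' L V) where
  bracket a b := mk L V ⁅a.1, b.1⁆ (⁅a.1, b.2⁆ - ⁅b.1, a.2⁆)
  add_lie a b c := by
    show mk L V ⁅a.1 + b.1, c.1⁆ (⁅a.1 + b.1, c.2⁆ - ⁅c.1, a.2 + b.2⁆) =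
      mk L V (⁅a.1, c.1⁆ + ⁅b.1, c.1⁆)
        ((⁅a.1, c.2⁆ - ⁅c.1, a.2⁆) + (⁅b.1, c.2⁆ - ⁅c.1, b.2⁆))
    exact congrArg₂ Prod.mk (by rw [add_lie]) (by rw [add_lie, lie_add]; abel)
  lie_add a b c := by
    show mk L V ⁅a.1, b.1 + c.1⁆ (⁅a.1, b.2 + c.2⁆ - ⁅b.1 + c.1, a.2⁆) =
      mk L V (⁅a.1, b.1⁆ + ⁅a.1, c.1⁆)
        ((⁅a.1, b.2⁆ - ⁅b.1, a.2⁆) + (⁅a.1, c.2⁆ - ⁅c.1, a.2⁆))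
    exact congrArg₂ Prod.mk (by rw [lie_add]) (by rw [lie_add, add_lie]; abel)
  lie_self a := by
    show mk L V ⁅a.1, a.1⁆ (⁅a.1, a.2⁆ - ⁅a.1, a.2⁆) = (0 : L × V)
    exact congrArg₂ Prod.mk (by simp) (by simp)
  leibniz_lie a b c := by
    show mk L V ⁅a.1, ⁅b.1, c.1⁆⁆ (⁅a.1, ⁅b.1, c.2⁆ - ⁅c.1, b.2⁆⁆ - ⁅⁅b.1, c.1⁆, a.2⁆) =
      mk L V (⁅⁅a.1, b.1⁆, c.1⁆ + ⁅b.1, ⁅a.1, c.1⁆⁆)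
        ((⁅⁅a.1, b.1⁆, c.2⁆ - ⁅c.1, ⁅a.1, b.2⁆ - ⁅b.1, a.2⁆⁆) +
          (⁅b.1, ⁅a.1, c.2⁆ - ⁅c.1, a.2⁆⁆ - ⁅⁅a.1, c.1⁆, b.2⁆))
    refine congrArg₂ Prod.mk ?_ ?_
    · rw [leibniz_lie]
    · simp only [lie_sub, sub_lie, lie_lie]
      abel

instance : LieAlgebra F (SemidirectProduct' L V) where
  lie_smul t a b := by
    show mk L V ⁅a.1, t • b.1⁆ (⁅a.1, t • b.2⁆ - ⁅t • b.1, a.2⁆) =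
      mk L V (t • ⁅a.1, b.1⁆) (t • (⁅a.1, b.2⁆ - ⁅b.1, a.2⁆))
    exact congrArg₂ Prod.mk (by rw [lie_smul]) (by rw [lie_smul, smul_lie, smul_sub])

theorem bracket_def (a b : SemidirectProduct' L V) :
    ⁅a, b⁆ = mk L V ⁅a.1, b.1⁆ (⁅a.1, b.2⁆ - ⁅b.1, a.2⁆) := rfl

end SemidirectProduct'


theorem zad_forward (m : ℕ) (hm : 1 ≤ m)
    (L : Type) [LieRing L] [LieAlgebra ℂ L]
    (V : Type) [AddCommGroup V] [Module ℂ V] [LieRingModule L V] [LieModule ℂ L V]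
    (E H : L) (bL : Module.Basis (Fin 2) ℂ L) (hE : bL 0 = E) (hH : bL 1 = H)
    (hHE : ⁅H, E⁆ = (2 : ℂ) • E)
    (v : Module.Basis (Fin (m + 1)) ℂ V)
    (hEv : ∀ i : Fin (m + 1), ⁅E, v i⁆ = (((i : ℕ) * (m + 1 - (i : ℕ)) : ℕ) : ℂ) •
        (if 0 < (i : ℕ) then v ⟨(i : ℕ) - 1, lt_of_le_of_lt (Nat.sub_le _ _) i.isLt⟩ else 0))
    (hHv : ∀ i : Fin (m + 1), ⁅H, v i⁆ = ((m : ℂ) - 2 * (i : ℕ)) • v i)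
    (hzad : IsZAD ℂ L V) : m = 2 := by
  have hmlt : m < m + 1 := by omega
  have hm1lt : m - 1 < m + 1 := by omega
  set lm : Fin (m + 1) := ⟨m, hmlt⟩ with hlm
  set pm : Fin (m + 1) := ⟨m - 1, hm1lt⟩ with hpm
  have coordv : ∀ (j i : Fin (m + 1)), v.coord j (v i) = if i = j then 1 else 0 :=
    fun j i => by simp [Module.Basis.coord_apply, Module.Basis.repr_self, Finsupp.single_apply]
  have hmC : ((m : ℂ)) ≠ 0 := Nat.cast_ne_zero.mpr (by omega)
  -- the four structural identities
  have A : ∀ x : V, v.coord lm ⁅E, x⁆ = 0 := by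
    have h : (v.coord lm) ∘ₗ (LieModule.toEnd ℂ L V E : V →ₗ[ℂ] V) = 0 := by
      apply v.ext; intro i
      simp only [LinearMap.comp_apply, LieModule.toEnd_apply_apply, LinearMap.zero_apply,
        hEv i, map_smul, smul_eq_mul]
      rcases Nat.eq_zero_or_pos (i : ℕ) with h0 | h0
      · rw [if_neg (by omega)]; simp
      · rw [if_pos h0, coordv]
        rw [if_neg (by intro hc; have := congrArg Fin.val hc; simp [hlm] at this; omega)]
        ring
    intro x; exact LinearMap.congr_fun h x
  have B : ∀ x : V, v.coord lm ⁅H, x⁆ = -(m : ℂ) * v.coord lm x := by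
    have h : (v.coord lm) ∘ₗ (LieModule.toEnd ℂ L V H : V →ₗ[ℂ] V)
        = (-(m : ℂ)) • v.coord lm := by
      apply v.ext; intro i
      simp only [LinearMap.comp_apply, LieModule.toEnd_apply_apply, LinearMap.smul_apply,
        hHv i, map_smul, smul_eq_mul, coordv]
      rcases eq_or_ne i lm with rfl | hne
      · rw [if_pos rfl]
        have hc : (((lm : Fin (m+1)) : ℕ) : ℂ) = (m : ℂ) := by simp [hlm]
        rw [hc]; ring
      · rw [if_neg hne]; ring
    intro x; exact LinearMap.congr_fun h x
  have C : ∀ x : V, v.coord pm ⁅E, x⁆ = (m : ℂ) * v.coord lm x := by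
    have h : (v.coord pm) ∘ₗ (LieModule.toEnd ℂ L V E : V →ₗ[ℂ] V)
        = ((m : ℂ)) • v.coord lm := by
      apply v.ext; intro i
      simp only [LinearMap.comp_apply, LieModule.toEnd_apply_apply, LinearMap.smul_apply,
        hEv i, map_smul, smul_eq_mul, coordv]
      rcases eq_or_ne i lm with rfl | hne
      · rw [if_pos rfl, if_pos (by simp [hlm]; omega)]
        rw [coordv, if_pos (by apply Fin.ext; simp [hlm, hpm])]
        have hval : (((lm : Fin (m+1)) : ℕ) * (m + 1 - ((lm : Fin (m+1)) : ℕ)) : ℕ) = m := by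
          simp [hlm]
        rw [hval]
      · rw [if_neg hne]
        have hineq : (i : ℕ) ≠ m := by
          intro hc; exact hne (Fin.ext (by simp [hlm, hc]))
        rcases Nat.eq_zero_or_pos (i : ℕ) with h0 | h0
        · rw [if_neg (by omega)]; simp
        · rw [if_pos h0, coordv]
          rw [if_neg (by intro hc; have := congrArg Fin.val hc; simp [hpm] at this; omega)]
          ring
    intro x; exact LinearMap.congr_fun h x
  have D : ∀ x : V, v.coord pm ⁅H, x⁆ = ((2 : ℂ) - m) * v.coord pm x := by
    have h : (v.coord pm) ∘ₗ (LieModule.toEnd ℂ L V H : V →ₗ[ℂ] V)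
        = (((2 : ℂ) - m)) • v.coord pm := by
      apply v.ext; intro i
      simp only [LinearMap.comp_apply, LieModule.toEnd_apply_apply, LinearMap.smul_apply,
        hHv i, map_smul, smul_eq_mul, coordv]
      rcases eq_or_ne i pm with rfl | hne
      · rw [if_pos rfl]
        have hc : (((pm : Fin (m+1)) : ℕ) : ℂ) = (m : ℂ) - 1 := by
          simp only [hpm]
          push_cast [Nat.cast_sub hm]
          ring
        rw [hc]; ring
      · rw [if_neg hne]; ring
    intro x; exact LinearMap.congr_fun h x
  -- the bilinear form
  set f : L →ₗ[ℂ] V →ₗ[ℂ] ℂ :=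
    LinearMap.mk₂ ℂ (fun x w => bL.repr x 0 * v.coord lm w)
      (by intro x x' y; simp only [map_add, Finsupp.add_apply]; ring)
      (by intro c x y; simp only [map_smul, Finsupp.smul_apply, smul_eq_mul]; ring)
      (by intro x y y'; simp only [map_add]; ring)
      (by intro c x y; simp only [map_smul, smul_eq_mul]; ring) with hfdef
  have hvan : ∀ (x : L) (w : V), ⁅x, w⁆ = 0 → f x w = 0 := by
    intro x w hxw
    set a := bL.repr x 0 with ha
    set b := bL.repr x 1 with hb
    have hx : x = a • E + b • H := by
      have h := bL.sum_repr x; rw [Fin.sum_univ_two, hE, hH] at h; exact h.symm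
    have heq : a • ⁅E, w⁆ + b • ⁅H, w⁆ = 0 := by
      rw [← smul_lie, ← smul_lie, ← add_lie, ← hx, hxw]
    have t1 : b * (-(m:ℂ) * v.coord lm w) = 0 := by
      have h := congrArg (v.coord lm) heq
      simpa [map_add, map_smul, smul_eq_mul, A, B] using h
    have t2 : a * ((m:ℂ) * v.coord lm w) + b * (((2:ℂ) - m) * v.coord pm w) = 0 := by
      have h := congrArg (v.coord pm) heq
      simpa [map_add, map_smul, smul_eq_mul, C, D] using h
    show a * v.coord lm w = 0
    rcases eq_or_ne b 0 with hb0 | hb0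
    · rw [hb0] at t2
      have : (m : ℂ) * (a * v.coord lm w) = 0 := by linear_combination t2
      exact (mul_eq_zero.mp this).resolve_left hmC
    · have h1 : -(m:ℂ) * v.coord lm w = 0 := (mul_eq_zero.mp t1).resolve_left hb0
      have : v.coord lm w = 0 := by
        rcases mul_eq_zero.mp h1 with h | h
        · exact absurd (neg_eq_zero.mp h) hmC
        · exact h
      rw [this, mul_zero]
  obtain ⟨Φ, hΦ⟩ := hzad f hvan
  have hEvm : ⁅E, v lm⁆ = (m : ℂ) • v pm := by
    rw [hEv lm, if_pos (by simp [hlm]; omega)]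
    have hval : (((lm : Fin (m+1)) : ℕ) * (m + 1 - ((lm : Fin (m+1)) : ℕ)) : ℕ) = m := by
      simp [hlm]
    rw [hval]
  have hHvpm : ⁅H, v pm⁆ = ((2 : ℂ) - m) • v pm := by
    rw [hHv pm]
    congr 1
    have : (((pm : Fin (m+1)) : ℕ) : ℂ) = (m : ℂ) - 1 := by
      simp only [hpm]
      push_cast [Nat.cast_sub hm]
      ring
    rw [this]; ring
  have key : ((2:ℂ) - m) • (⟨⁅E, v lm⁆, Submodule.subset_span ⟨E, v lm, rfl⟩⟩ :
        lieActionSpan ℂ L V)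
      = (m:ℂ) • ⟨⁅H, v pm⁆, Submodule.subset_span ⟨H, v pm, rfl⟩⟩ := by
    apply Subtype.ext
    show ((2:ℂ) - m) • ⁅E, v lm⁆ = (m:ℂ) • ⁅H, v pm⁆
    rw [hEvm, hHvpm, smul_smul, smul_smul]; ring_nf
  have e1 : f E (v lm) = 1 := by
    show bL.repr E 0 * v.coord lm (v lm) = 1
    rw [← hE, coordv, if_pos rfl]; simp
  have e2 : f H (v pm) = 0 := by
    show bL.repr H 0 * v.coord lm (v pm) = 0
    rw [← hH]; simp [Module.Basis.repr_self, Finsupp.single_apply]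
  have hfin := congrArg Φ key
  rw [map_smul, map_smul, ← hΦ E (v lm), ← hΦ H (v pm), e1, e2, smul_eq_mul, smul_eq_mul,
    mul_one, mul_zero] at hfin
  have : (m : ℂ) = 2 := by linear_combination -hfin
  exact_mod_cast this

theorem zad_backward
    (L : Type) [LieRing L] [LieAlgebra ℂ L]
    (V : Type) [AddCommGroup V] [Module ℂ V] [LieRingModule L V] [LieModule ℂ L V]
    (E H : L) (bL : Module.Basis (Fin 2) ℂ L) (hE : bL 0 = E) (hH : bL 1 = H)
    (v : Module.Basis (Fin 3) ℂ V)
    (hE0 : ⁅E, v 0⁆ = 0) (hE1 : ⁅E, v 1⁆ = (2:ℂ) • v 0) (hE2 : ⁅E, v 2⁆ = (2:ℂ) • v 1)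
    (hH0 : ⁅H, v 0⁆ = (2:ℂ) • v 0) (hH1 : ⁅H, v 1⁆ = 0) (hH2 : ⁅H, v 2⁆ = (-2:ℂ) • v 2) :
    IsZAD ℂ L V := by
  intro f hf
  have c1 : f E (v 0) = 0 := by
    have := hf E (v 0) hE0; simpa using this
  have c2 : f H (v 1) = 0 := by
    have := hf H (v 1) hH1; simpa using this
  have c3 : f E (v 1) = f H (v 0) := by
    have hz : ⁅E + H, v 1 - v 0⁆ = 0 := by
      rw [add_lie, lie_sub, lie_sub, hE0, hE1, hH0, hH1]
      module
    have h := hf (E + H) (v 1 - v 0) hz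
    simp only [map_add, map_sub, LinearMap.add_apply] at h
    linear_combination h + c1 - c2
  set ΦV : V →ₗ[ℂ] ℂ :=
    v.constr ℂ ![f E (v 1) / 2, f E (v 2) / 2, -(f H (v 2)) / 2] with hΦV
  have hc0 : ΦV (v 0) = f E (v 1) / 2 := by
    rw [hΦV, Module.Basis.constr_basis]; simp
  have hc1 : ΦV (v 1) = f E (v 2) / 2 := by
    rw [hΦV, Module.Basis.constr_basis]; simp
  have hc2 : ΦV (v 2) = -(f H (v 2)) / 2 := by
    rw [hΦV, Module.Basis.constr_basis]; simp
  set B : L →ₗ[ℂ] V →ₗ[ℂ] ℂ :=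
    (LinearMap.llcomp ℂ V V ℂ ΦV).comp (LieModule.toEnd ℂ L V : L →ₗ[ℂ] Module.End ℂ V)
    with hBdef
  have hBval : ∀ (x : L) (w : V), B x w = ΦV ⁅x, w⁆ := fun x w => rfl
  have hfeq : f = B := by
    apply bL.ext; intro i
    apply v.ext; intro j
    fin_cases i <;> fin_cases j
    · show f (bL 0) (v 0) = ΦV ⁅bL 0, v 0⁆
      rw [hE, hE0, ΦV.map_zero]; exact c1
    · show f (bL 0) (v 1) = ΦV ⁅bL 0, v 1⁆
      rw [hE, hE1, map_smul, hc0, smul_eq_mul]; ring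
    · show f (bL 0) (v 2) = ΦV ⁅bL 0, v 2⁆
      rw [hE, hE2, map_smul, hc1, smul_eq_mul]; ring
    · show f (bL 1) (v 0) = ΦV ⁅bL 1, v 0⁆
      rw [hH, hH0, map_smul, hc0, smul_eq_mul, ← c3]; ring
    · show f (bL 1) (v 1) = ΦV ⁅bL 1, v 1⁆
      rw [hH, hH1, ΦV.map_zero]; exact c2
    · show f (bL 1) (v 2) = ΦV ⁅bL 1, v 2⁆
      rw [hH, hH2, map_smul, hc2, smul_eq_mul]; ring
  refine ⟨ΦV.comp (lieActionSpan ℂ L V).subtype, fun x w => ?_⟩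
  have : f x w = ΦV ⁅x, w⁆ := by rw [hfeq]; exact hBval x w
  exact this

theorem aging_not_zpd (L : Type) [LieRing L] [LieAlgebra ℂ L]
    (V : Type) [AddCommGroup V] [Module ℂ V] [LieRingModule L V] [LieModule ℂ L V]
    (E H : L) (bL : Module.Basis (Fin 2) ℂ L) (hE : bL 0 = E) (hH : bL 1 = H)
    (hHE : ⁅H, E⁆ = (2 : ℂ) • E)
    (u w : V) (bV : Module.Basis (Fin 2) ℂ V) (hu : bV 0 = u) (hw : bV 1 = w)
    (hHu : ⁅H, u⁆ = u) (hHw : ⁅H, w⁆ = -w) (hEw : ⁅E, w⁆ = u) (hEu : ⁅E, u⁆ = 0) :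
    ¬ IsZPD ℂ (SemidirectProduct' L V) := by
  have fst_add : ∀ (x y : SemidirectProduct' L V), (x + y).1 = x.1 + y.1 := fun _ _ => rfl
  have snd_add : ∀ (x y : SemidirectProduct' L V), (x + y).2 = x.2 + y.2 := fun _ _ => rfl
  have fst_smul : ∀ (c : ℂ) (x : SemidirectProduct' L V), (c • x).1 = c • x.1 := fun _ _ => rfl
  have snd_smul : ∀ (c : ℂ) (x : SemidirectProduct' L V), (c • x).2 = c • x.2 := fun _ _ => rfl
  set f : SemidirectProduct' L V →ₗ[ℂ] SemidirectProduct' L V →ₗ[ℂ] ℂ :=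
    LinearMap.mk₂ ℂ
      (fun x y => bL.repr x.1 0 * bV.repr y.2 1 - bV.repr x.2 1 * bL.repr y.1 0)
      (by intro x x' y; simp only [fst_add, snd_add, map_add, Finsupp.add_apply]; ring)
      (by intro c x y; simp only [fst_smul, snd_smul, map_smul, Finsupp.smul_apply,
            smul_eq_mul]; ring)
      (by intro x y y'; simp only [fst_add, snd_add, map_add, Finsupp.add_apply]; ring)
      (by intro c x y; simp only [fst_smul, snd_smul, map_smul, Finsupp.smul_apply,
            smul_eq_mul]; ring) with hf
  intro hzpd
  have hEne : E ≠ 0 := hE ▸ bL.ne_zero 0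
  have hEH : ⁅E, H⁆ = -((2:ℂ) • E) := by rw [← lie_skew, hHE]
  have cE0 : bL.repr E 0 = 1 := by rw [← hE]; simp
  have cH0 : bL.repr H 0 = 0 := by
    rw [← hH]; simp [Module.Basis.repr_self, Finsupp.single_apply]
  have cu0 : bV.repr u 0 = 1 := by rw [← hu]; simp
  have cu1 : bV.repr u 1 = 0 := by
    rw [← hu]; simp [Module.Basis.repr_self, Finsupp.single_apply]
  have cw0 : bV.repr w 0 = 0 := by
    rw [← hw]; simp [Module.Basis.repr_self, Finsupp.single_apply]
  have cw1 : bV.repr w 1 = 1 := by rw [← hw]; simp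
  have hvanish : ∀ x y : SemidirectProduct' L V, ⁅x, y⁆ = 0 → f x y = 0 := by
    intro x y hxy
    rw [SemidirectProduct'.bracket_def] at hxy
    have h1 : ⁅x.1, y.1⁆ = 0 := congrArg Prod.fst hxy
    have h2 : ⁅x.1, y.2⁆ - ⁅y.1, x.2⁆ = 0 := congrArg Prod.snd hxy
    set a := bL.repr x.1 0 with ha
    set b := bL.repr x.1 1 with hb
    set a' := bL.repr y.1 0 with ha'
    set b' := bL.repr y.1 1 with hb'
    set c := bV.repr x.2 0 with hc
    set d := bV.repr x.2 1 with hd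
    set c' := bV.repr y.2 0 with hc'
    set d' := bV.repr y.2 1 with hd'
    have hx1 : x.1 = a • E + b • H := by
      have h := bL.sum_repr x.1; rw [Fin.sum_univ_two, hE, hH] at h; exact h.symm
    have hy1 : y.1 = a' • E + b' • H := by
      have h := bL.sum_repr y.1; rw [Fin.sum_univ_two, hE, hH] at h; exact h.symm
    have hx2 : x.2 = c • u + d • w := by
      have h := bV.sum_repr x.2; rw [Fin.sum_univ_two, hu, hw] at h; exact h.symm
    have hy2 : y.2 = c' • u + d' • w := by
      have h := bV.sum_repr y.2; rw [Fin.sum_univ_two, hu, hw] at h; exact h.symm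
    have hbr1 : ⁅x.1, y.1⁆ = ((2:ℂ)*(b*a') - 2*(a*b')) • E := by
      rw [hx1, hy1]
      simp only [lie_add, add_lie, lie_smul, smul_lie, lie_self, smul_zero, hHE, hEH]
      module
    have hbr2 : ⁅x.1, y.2⁆ - ⁅y.1, x.2⁆ =
        (a*d' + b*c' - a'*d - b'*c) • u + (b'*d - b*d') • w := by
      rw [hx1, hy1, hx2, hy2]
      simp only [lie_add, add_lie, lie_smul, smul_lie, hEu, hEw, hHu, hHw]
      module
    rw [hbr1] at h1
    have hba : (2:ℂ)*(b*a') - 2*(a*b') = 0 := by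
      rcases smul_eq_zero.mp h1 with h | h
      · exact h
      · exact absurd h hEne
    rw [hbr2] at h2
    have k1 : a*d' + b*c' - a'*d - b'*c = 0 := by
      have h := congrArg (bV.repr · 0) h2
      simpa [map_add, map_smul, Finsupp.add_apply, Finsupp.smul_apply, cu0, cw0] using h
    have k2 : b'*d - b*d' = 0 := by
      have h := congrArg (bV.repr · 1) h2
      simpa [map_add, map_smul, Finsupp.add_apply, Finsupp.smul_apply, cu1, cw1] using h
    show a * d' - d * a' = 0
    rcases eq_or_ne b 0 with hb0 | hb0
    · rcases eq_or_ne b' 0 with hb'0 | hb'0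
      · linear_combination k1 - c' * hb0 + c * hb'0
      · have haz : a = 0 := by
          have : (2:ℂ) * a * b' = 0 := by linear_combination -hba + 2*a'*hb0
          rcases mul_eq_zero.mp this with h | h
          · simpa using mul_eq_zero.mp h
          · exact absurd h hb'0
        have hdz : d = 0 := by
          have : b' * d = 0 := by linear_combination k2 + d' * hb0
          exact (mul_eq_zero.mp this).resolve_left hb'0
        rw [haz, hdz]; ring
    · have key : b * (a * d' - d * a') = 0 := by
        linear_combination (-a) * k2 - (d/2) * hba
      exact (mul_eq_zero.mp key).resolve_left hb0
  obtain ⟨Φ, hΦ⟩ := hzpd f hvanish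
  set x₁ : SemidirectProduct' L V := (E, 0) with hx₁
  set y₁ : SemidirectProduct' L V := (0, w) with hy₁
  set x₂ : SemidirectProduct' L V := (H, 0) with hx₂
  set y₂ : SemidirectProduct' L V := (0, u) with hy₂
  have e1 : f x₁ y₁ = 1 := by
    show bL.repr E 0 * bV.repr w 1 - bV.repr (0:V) 1 * bL.repr (0:L) 0 = 1
    simp [cE0, cw1]
  have e2 : f x₂ y₂ = 0 := by
    show bL.repr H 0 * bV.repr u 1 - bV.repr (0:V) 1 * bL.repr (0:L) 0 = 0
    simp [cH0, cu1]
  have ebr : ⁅x₁, y₁⁆ = ⁅x₂, y₂⁆ := by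
    rw [SemidirectProduct'.bracket_def, SemidirectProduct'.bracket_def]
    show (⁅E, (0:L)⁆, ⁅E, w⁆ - ⁅(0:L), (0:V)⁆) = (⁅H, (0:L)⁆, ⁅H, u⁆ - ⁅(0:L), (0:V)⁆)
    rw [hEw, hHu]; simp
  have contra : (1:ℂ) = 0 := by
    rw [← e1, ← e2, hΦ x₁ y₁, hΦ x₂ y₂]
    exact congrArg Φ (Subtype.ext ebr)
  exact one_ne_zero contra

/-- let `b = ℂE ⊕ ℂH` be the Borel subalgebra of `sl₂(ℂ)` (so `⁅H,E⁆ = 2E`)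
and let `V(m)` be the `(m+1)`-dimensional simple `sl₂`-module restricted to `b`.  Then
`V(m)` is a zad `b`-module iff `m = 2`.  Consequently the `4`-dimensional aging algebra
`age(1) = b ⋉ V` (where `V` has basis `u, w` with `H·u = u`, `H·w = −w`, `E·w = u`,
`E·u = 0`) is not zpd. -/
theorem borel_module_zad_iff_and_aging_not_zpd :
    (∀ (m : ℕ), 1 ≤ m →
      ∀ (L : Type) [LieRing L] [LieAlgebra ℂ L]
        (V : Type) [AddCommGroup V] [Module ℂ V] [LieRingModule L V] [LieModule ℂ L V]
        (E H : L) (bL : Module.Basis (Fin 2) ℂ L), bL 0 = E → bL 1 = H →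
        ⁅H, E⁆ = (2 : ℂ) • E →
        ∀ (v : Module.Basis (Fin (m + 1)) ℂ V),
          (∀ i : Fin (m + 1),
            ⁅E, v i⁆ = (((i : ℕ) * (m + 1 - (i : ℕ)) : ℕ) : ℂ) •
              (if 0 < (i : ℕ)
                then v ⟨(i : ℕ) - 1, lt_of_le_of_lt (Nat.sub_le _ _) i.isLt⟩ else 0)) →
          (∀ i : Fin (m + 1), ⁅H, v i⁆ = ((m : ℂ) - 2 * (i : ℕ)) • v i) →
          (IsZAD ℂ L V ↔ m = 2)) ∧
    (∀ (L : Type) [LieRing L] [LieAlgebra ℂ L]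
      (V : Type) [AddCommGroup V] [Module ℂ V] [LieRingModule L V] [LieModule ℂ L V]
      (E H : L) (bL : Module.Basis (Fin 2) ℂ L), bL 0 = E → bL 1 = H →
      ⁅H, E⁆ = (2 : ℂ) • E →
      ∀ (u w : V) (bV : Module.Basis (Fin 2) ℂ V), bV 0 = u → bV 1 = w →
        ⁅H, u⁆ = u → ⁅H, w⁆ = -w → ⁅E, w⁆ = u → ⁅E, u⁆ = 0 →
        ¬ IsZPD ℂ (SemidirectProduct' L V)) := by
  constructor
  · intro m hm L _ _ V _ _ _ _ E H bL hE hH hHE v hEv hHv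
    constructor
    · intro hzad
      exact zad_forward m hm L V E H bL hE hH hHE v hEv hHv hzad
    · rintro rfl
      have hE0 : ⁅E, v 0⁆ = 0 := by simpa using hEv 0
      have hE1 : ⁅E, v 1⁆ = (2:ℂ) • v 0 := by simpa using hEv 1
      have hE2 : ⁅E, v 2⁆ = (2:ℂ) • v 1 := by simpa using hEv 2
      have hH0 : ⁅H, v 0⁆ = (2:ℂ) • v 0 := by simpa using hHv 0
      have hH1 : ⁅H, v 1⁆ = 0 := by
        have h := hHv 1; norm_num at h; simpa using h
      have hH2 : ⁅H, v 2⁆ = (-2:ℂ) • v 2 := by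
        have h := hHv 2; norm_num at h; simpa using h
      exact zad_backward L V E H bL hE hH v hE0 hE1 hE2 hH0 hH1 hH2
  · intro L _ _ V _ _ _ _ E H bL hE hH hHE u w bV hu hw hHu hHw hEw hEu
    exact aging_not_zpd L V E H bL hE hH hHE u w bV hu hw hHu hHw hEw hEu
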